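/- Let p be a prime, ζ ∈ ℂ a primitive p-th root of unity, w : Fin n → ZMod p a weight function, and σ the ℂ-algebra automorphism of MvPolynomial (Fin n) ℂ with σ(Xᵢ) = ζ^{wᵢ}·Xᵢ. Let f be a polynomial with σ(f) = f and with finite-dimensional Jacobian algebra Q_f; σ maps the Jacobian ideal J_f to itself and hence induces a ℂ-linear automorphism σ̄ of Q_f. Let τ be the ℂ-algebra automorphism of MvPolynomial (Fin n ⊕ Fin n) ℂ with τ(X_{inl i}) = ζ^{wᵢ}·X_{inl i} and τ(X_{inr i}) = ζ^{-wᵢ}·X_{inr i}; then τ fixes F = f ⊕ f, preserves J_F, and induces τ̄ on Q_F. The dimension of the fixed subspace of τ̄ on Q_F equals the sum over k ∈ ZMod p of the squares of the dimensions of the eigenspaces of σ̄ on Q_f for the eigenvalues ζ^k: dim (Q_F)^{τ̄} = Σ_k (dim ker(σ̄ − ζ^k·id))². -/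

import Mathlib

open MvPolynomial

/-- The Jacobian ideal of a multivariate polynomial: the ideal generated by its
partial derivatives. -/
noncomputable def jacobianIdeal {σ : Type*} (f : MvPolynomial σ ℂ) :
    Ideal (MvPolynomial σ ℂ) :=
  Ideal.span (Set.range fun i : σ => MvPolynomial.pderiv i f)

/-- `f ⊕ f`: the polynomial `f(x₁,…,xₙ) + f(y₁,…,yₙ)` in `2n` variables. -/
noncomputable def doubling {n : ℕ} (f : MvPolynomial (Fin n) ℂ) :
    MvPolynomial (Fin n ⊕ Fin n) ℂ :=
  rename Sum.inl f + rename Sum.inr f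

open Finset Module MvPolynomial

open Finset Module

/-- Dimension of `ker (U - c•id)` for an operator diagonal in a basis. -/
lemma ker_diag_finrank {V : Type*} [AddCommGroup V] [Module ℂ V] {ι : Type*} [Fintype ι]
    [DecidableEq ι] (b : Basis ι ℂ V) (U : V →ₗ[ℂ] V) (μ : ι → ℂ)
    (h : ∀ i, U (b i) = μ i • b i) (c : ℂ) :
    Module.finrank ℂ (LinearMap.ker (U - c • LinearMap.id)) =
      (Finset.univ.filter (fun i => μ i = c)).card := by
  classical
  have hker : LinearMap.ker (U - c • LinearMap.id) =
      Submodule.span ℂ (Set.range (fun i : {i // μ i = c} => b (i : ι))) := by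
    apply le_antisymm
    · intro v hv
      rw [LinearMap.mem_ker, LinearMap.sub_apply, LinearMap.smul_apply, LinearMap.id_apply,
        sub_eq_zero] at hv
      have hsum : ∑ i, ((μ i - c) * b.repr v i) • b i = 0 := by
        have h1 : ∑ i, (μ i * b.repr v i) • b i = U v := by
          conv_rhs => rw [← b.sum_repr v]
          rw [map_sum]
          refine Finset.sum_congr rfl fun i _ => ?_
          rw [map_smul, h i, smul_smul, mul_comm]
        have h2 : ∑ i, (c * b.repr v i) • b i = c • v := by
          conv_rhs => rw [← b.sum_repr v]
          rw [Finset.smul_sum]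
          refine Finset.sum_congr rfl fun i _ => ?_
          rw [smul_smul]
        simp only [sub_mul, sub_smul, Finset.sum_sub_distrib, h1, h2, hv, sub_self]
      have hcoeff := Fintype.linearIndependent_iff.mp b.linearIndependent _ hsum
      have hzero : ∀ i, μ i ≠ c → b.repr v i = 0 := by
        intro i hi
        have := hcoeff i
        rcases mul_eq_zero.mp this with h' | h'
        · exact absurd (sub_eq_zero.mp h') hi
        · exact h'
      have : v = ∑ i, b.repr v i • b i := (b.sum_repr v).symm
      rw [this]
      refine Submodule.sum_mem _ fun i _ => ?_
      by_cases hi : μ i = c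
      · exact Submodule.smul_mem _ _ (Submodule.subset_span ⟨⟨i, hi⟩, rfl⟩)
      · rw [hzero i hi, zero_smul]; exact Submodule.zero_mem _
    · rw [Submodule.span_le]
      rintro _ ⟨⟨i, hi⟩, rfl⟩
      simp only [SetLike.mem_coe, LinearMap.mem_ker, LinearMap.sub_apply, LinearMap.smul_apply,
        LinearMap.id_apply, h i, hi, sub_self]
  have hli : LinearIndependent ℂ (fun i : {i // μ i = c} => b (i : ι)) :=
    b.linearIndependent.comp _ Subtype.val_injective
  rw [hker, finrank_span_eq_card hli, Fintype.card_subtype]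

lemma card_pairs_fst {α : Type*} [Fintype α] {κ : Type*} [Fintype κ] [DecidableEq κ]
    (g : α → κ) :
    (Finset.univ.filter fun z : α × α => g z.1 = g z.2).card
      = ∑ k : κ, (Finset.univ.filter fun x => g x = k).card ^ 2 := by
  classical
  rw [Finset.card_eq_sum_card_fiberwise
    (f := fun z : α × α => g z.1) (t := Finset.univ) (fun _ _ => Finset.mem_univ _)]
  refine Finset.sum_congr rfl fun k _ => ?_
  rw [Finset.filter_filter]
  have hcongr : (Finset.univ.filter fun z : α × α => (g z.1 = g z.2) ∧ g z.1 = k)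
      = Finset.univ.filter fun z : α × α => (g z.1 = k) ∧ (g z.2 = k) := by
    refine Finset.filter_congr fun z _ => ?_
    constructor
    · rintro ⟨h1, h2⟩; exact ⟨h2, h2 ▸ h1.symm⟩
    · rintro ⟨h1, h2⟩; exact ⟨h1.trans h2.symm, h1⟩
  rw [hcongr, ← Finset.univ_product_univ,
    Finset.filter_product (fun x => g x = k) (fun x => g x = k), Finset.card_product, sq]

lemma card_sigma_fst {κ : Type*} [Fintype κ] [DecidableEq κ] (m : κ → ℕ) (k : κ) :
    (Finset.univ.filter fun x : Σ k', Fin (m k') => x.1 = k).card = m k := by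
  classical
  rw [← Fintype.card_subtype]
  have e : {x : Σ k', Fin (m k') // x.1 = k} ≃ Fin (m k) :=
    { toFun := fun x => Fin.cast (congrArg m x.2) x.1.2
      invFun := fun j => ⟨⟨k, j⟩, rfl⟩
      left_inv := by rintro ⟨⟨k', j⟩, rfl⟩; rfl
      right_inv := fun j => rfl }
  rw [Fintype.card_congr e, Fintype.card_fin]

open Finset Module

lemma isInternal_ker_of_pow_eq_one {p : ℕ} [hp : Fact p.Prime] {ζ : ℂ}
    (hζ : IsPrimitiveRoot ζ p) {V : Type*} [AddCommGroup V] [Module ℂ V]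
    (U : V →ₗ[ℂ] V) (hU : U ^ p = 1) :
    DirectSum.IsInternal (fun k : ZMod p =>
      LinearMap.ker (U - ζ ^ (k : ZMod p).val • LinearMap.id)) := by
  classical
  have hp0 : 0 < p := hp.out.pos
  have hζ0 : ζ ≠ 0 := by
    intro h
    have := hζ.pow_eq_one
    rw [h, zero_pow hp0.ne'] at this
    exact zero_ne_one this
  -- identify with eigenspaces
  have hEeq : (fun k : ZMod p => LinearMap.ker (U - ζ ^ (k : ZMod p).val • LinearMap.id))
      = fun k : ZMod p => Module.End.eigenspace U (ζ ^ (k : ZMod p).val) := by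
    funext k
    ext x
    rw [LinearMap.mem_ker, Module.End.mem_eigenspace_iff, LinearMap.sub_apply,
      LinearMap.smul_apply, LinearMap.id_apply, sub_eq_zero]
  have hinj : Function.Injective (fun k : ZMod p => ζ ^ (k : ZMod p).val) := by
    intro a b hab
    exact ZMod.val_injective p (hζ.pow_inj (ZMod.val_lt a) (ZMod.val_lt b) hab)
  rw [DirectSum.isInternal_submodule_iff_iSupIndep_and_iSup_eq_top]
  constructor
  · rw [hEeq]
    exact (Module.End.eigenspaces_iSupIndep U).comp hinj
  · -- spanning via projectors
    rw [eq_top_iff]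
    intro v _
    -- the partial "projector" sums
    set S : ZMod p → (V →ₗ[ℂ] V) := fun k =>
      ∑ j ∈ Finset.range p, ((ζ ^ (k : ZMod p).val)⁻¹) ^ j • U ^ j with hS
    have hcp : ∀ k : ZMod p, (ζ ^ (k : ZMod p).val) ^ p = 1 := by
      intro k
      rw [← pow_mul, mul_comm, pow_mul, hζ.pow_eq_one, one_pow]
    have hc0 : ∀ k : ZMod p, (ζ ^ (k : ZMod p).val) ≠ 0 := fun k => pow_ne_zero _ hζ0
    -- U * S k = c k • S k
    have hUS : ∀ k : ZMod p, U * S k = (ζ ^ (k : ZMod p).val) • S k := by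
      intro k
      set c : ℂ := ζ ^ (k : ZMod p).val with hc
      obtain ⟨q, hq⟩ : ∃ q, p = q + 1 := ⟨p - 1, (Nat.succ_pred_eq_of_pos hp0).symm⟩
      have lhs : U * S k = ∑ j ∈ Finset.range p, (c⁻¹) ^ j • U ^ (j + 1) := by
        rw [hS, Finset.mul_sum]
        refine Finset.sum_congr rfl fun j _ => ?_
        rw [mul_smul_comm, ← pow_succ']
      have rhs : c • S k = ∑ j ∈ Finset.range p, (c * (c⁻¹) ^ j) • U ^ j := by
        rw [hS, Finset.smul_sum]
        refine Finset.sum_congr rfl fun j _ => ?_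
        rw [smul_smul]
      rw [lhs, rhs, hq, Finset.sum_range_succ, Finset.sum_range_succ']
      have h1 : ∀ j, (c * (c⁻¹) ^ (j + 1)) = (c⁻¹) ^ j := by
        intro j
        rw [pow_succ', ← mul_assoc, mul_inv_cancel₀ (hc0 k), one_mul]
      have h2 : (c⁻¹ : ℂ) ^ q • U ^ (q + 1) = (c * (c⁻¹) ^ 0) • U ^ 0 := by
        have hcq : c ^ q * c = 1 := by rw [← pow_succ, ← hq, hcp k]
        have hcq' : (c⁻¹ : ℂ) ^ q = c := by
          rw [inv_pow, eq_inv_of_mul_eq_one_left hcq, inv_inv]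
        rw [hcq', ← hq, hU, pow_zero, pow_zero, mul_one]
      simp only [h1, h2]
    -- sum of all S k is p • 1
    have hsumS : ∑ k : ZMod p, S k = (p : ℂ) • 1 := by
      rw [hS]
      rw [Finset.sum_comm' (s := Finset.univ) (t := fun _ => Finset.range p)
        (t' := Finset.range p) (s' := fun _ => Finset.univ) (by simp)]
      have hinner : ∀ j ∈ Finset.range p,
          ∑ k : ZMod p, ((ζ ^ (k : ZMod p).val)⁻¹) ^ j • (U ^ j : V →ₗ[ℂ] V)
            = (if j = 0 then (p : ℂ) else 0) • U ^ j := by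
        intro j hj
        rw [← Finset.sum_smul]
        congr 1
        have hval : ∑ k : ZMod p, ((ζ ^ (k : ZMod p).val)⁻¹) ^ j
            = ∑ i ∈ Finset.range p, ((ζ ^ j)⁻¹) ^ i := by
          refine Finset.sum_nbij' (fun k => (k : ZMod p).val) (fun i => (i : ZMod p)) ?_ ?_ ?_ ?_ ?_
          · intro k _; exact Finset.mem_range.mpr (ZMod.val_lt k)
          · intro i _; exact Finset.mem_univ _
          · intro k _; simp [ZMod.natCast_val, ZMod.cast_id]
          · intro i hi; exact ZMod.val_cast_of_lt (Finset.mem_range.mp hi)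
          · intro k _
            rw [← inv_pow, ← inv_pow, ← pow_mul, ← pow_mul, mul_comm]
        rw [hval]
        by_cases hj0 : j = 0
        · subst hj0; simp
        · rw [if_neg hj0]
          have hcop : Nat.Coprime j p :=
            Nat.Coprime.symm (hp.out.coprime_iff_not_dvd.mpr
              (Nat.not_dvd_of_pos_of_lt (Nat.pos_of_ne_zero hj0) (Finset.mem_range.mp hj)))
          exact ((hζ.pow_of_coprime j hcop).inv).geom_sum_eq_zero hp.out.one_lt
      rw [Finset.sum_congr rfl hinner,
        Finset.sum_eq_single_of_mem 0 (Finset.mem_range.mpr hp0)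
          (fun j _ hj0 => by rw [if_neg hj0, zero_smul]),
        if_pos rfl, pow_zero]
    -- conclude
    have hv : ((p : ℂ))⁻¹ • ∑ k : ZMod p, S k v = v := by
      have : (∑ k : ZMod p, S k) v = (p : ℂ) • v := by rw [hsumS]; simp
      rw [← LinearMap.sum_apply] at *
      rw [this, smul_smul, inv_mul_cancel₀ (by exact_mod_cast hp0.ne'), one_smul]
    rw [← hv]
    refine Submodule.smul_mem _ _ (Submodule.sum_mem _ fun k _ => ?_)
    refine Submodule.mem_iSup_of_mem k ?_
    rw [LinearMap.mem_ker, LinearMap.sub_apply, LinearMap.smul_apply, LinearMap.id_apply,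
      sub_eq_zero]
    have := congrArg (fun (T : V →ₗ[ℂ] V) => T v) (hUS k)
    simpa using this

open MvPolynomial

noncomputable section

/-- Conjugating `pderiv j` by a diagonal automorphism rescales it. -/
lemma conj_pderiv {ι : Type*} (e : MvPolynomial ι ℂ ≃ₐ[ℂ] MvPolynomial ι ℂ)
    (μ : ι → ℂ) (hX : ∀ s, e (X s) = μ s • X s) (j : ι) (g : MvPolynomial ι ℂ) :
    e.symm (pderiv j (e g)) = μ j • pderiv j g := by
  classical
  let D : Derivation ℂ (MvPolynomial ι ℂ) (MvPolynomial ι ℂ) :=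
    { toLinearMap := e.symm.toLinearMap ∘ₗ (pderiv j).toLinearMap ∘ₗ e.toLinearMap
      map_one_eq_zero' := by
        show e.symm (pderiv j (e 1)) = 0
        rw [map_one, Derivation.map_one_eq_zero, map_zero]
      leibniz' := fun a b => by
        show e.symm (pderiv j (e (a * b))) =
          a • e.symm (pderiv j (e b)) + b • e.symm (pderiv j (e a))
        rw [map_mul, Derivation.leibniz, map_add, smul_eq_mul, smul_eq_mul, map_mul, map_mul,
          AlgEquiv.symm_apply_apply, AlgEquiv.symm_apply_apply, smul_eq_mul, smul_eq_mul] }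
  have hD : D = μ j • pderiv j := by
    apply MvPolynomial.derivation_ext
    intro i
    show e.symm (pderiv j (e (X i))) = μ j • (pderiv j (X i))
    rw [hX i, Derivation.map_smul]
    by_cases hij : j = i
    · subst hij; rw [pderiv_X_self, map_smul, map_one]
    · rw [pderiv_X_of_ne (Ne.symm hij), smul_zero, map_zero, smul_zero]
  calc e.symm (pderiv j (e g)) = D g := rfl
    _ = (μ j • pderiv j) g := by rw [hD]
    _ = μ j • pderiv j g := rfl

end

open MvPolynomial

noncomputable section

open TensorProduct in
/-- `ℂ[x] ⊗ ℂ[y] ≃ₐ ℂ[x,y]`. -/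
noncomputable def sumTensorEquiv (n : ℕ) :
    (MvPolynomial (Fin n) ℂ ⊗[ℂ] MvPolynomial (Fin n) ℂ) ≃ₐ[ℂ]
      MvPolynomial (Fin n ⊕ Fin n) ℂ :=
  AlgEquiv.ofAlgHom
    (Algebra.TensorProduct.productMap
      (MvPolynomial.rename Sum.inl) (MvPolynomial.rename Sum.inr))
    (MvPolynomial.aeval (Sum.elim
      (fun i => (X i : MvPolynomial (Fin n) ℂ) ⊗ₜ[ℂ] 1)
      (fun i => (1 : MvPolynomial (Fin n) ℂ) ⊗ₜ[ℂ] X i)))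
    (by
      apply MvPolynomial.algHom_ext
      rintro (i | i) <;>
        simp [Algebra.TensorProduct.productMap_apply_tmul])
    (by
      ext i
      · simp [Algebra.TensorProduct.productMap_apply_tmul]
      · simp [Algebra.TensorProduct.productMap_apply_tmul])

open TensorProduct in
lemma sumTensorEquiv_tmul (n : ℕ) (a b : MvPolynomial (Fin n) ℂ) :
    sumTensorEquiv n (a ⊗ₜ[ℂ] b) = rename Sum.inl a * rename Sum.inr b := by
  simp [sumTensorEquiv, Algebra.TensorProduct.productMap_apply_tmul]

lemma pderiv_doubling {n : ℕ} (f : MvPolynomial (Fin n) ℂ) (j : Fin n ⊕ Fin n) :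
    pderiv j (doubling f) =
      Sum.elim (fun i => rename Sum.inl (pderiv i f))
        (fun i => rename Sum.inr (pderiv i f)) j := by
  classical
  have hl : ∀ i : Fin n, pderiv (Sum.inl i : Fin n ⊕ Fin n) (rename Sum.inr f) = 0 := by
    intro i
    apply pderiv_eq_zero_of_notMem_vars
    intro hmem
    have := MvPolynomial.vars_rename Sum.inr f hmem
    simp at this
  have hr : ∀ i : Fin n, pderiv (Sum.inr i : Fin n ⊕ Fin n) (rename Sum.inl f) = 0 := by
    intro i
    apply pderiv_eq_zero_of_notMem_vars
    intro hmem
    have := MvPolynomial.vars_rename Sum.inl f hmem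
    simp at this
  cases j with
  | inl i =>
      rw [doubling, map_add, hl i, add_zero,
        pderiv_rename Sum.inl_injective]
      rfl
  | inr i =>
      rw [doubling, map_add, hr i, zero_add,
        pderiv_rename Sum.inr_injective]
      rfl

end



set_option maxHeartbeats 2000000 in
set_option synthInstance.maxHeartbeats 1000000 in
open TensorProduct in
/-- Let `σ` be the diagonal `ℤ_p`-action with weights `w` on the polynomial ring, `f` a
`σ`-invariant polynomial with finite-dimensional Jacobian algebra, `σ̄` the induced
linear automorphism of `Q_f`, and `τ` the doubled action on `2n` variables (scaling the
`x`-variables by `ζ^{wᵢ}` and the `y`-variables by `ζ^{-wᵢ}`). Then `τ` fixes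
`F = f ⊕ f`, preserves `J_F`, and for the induced map `τ̄` on `Q_F`, the dimension of
the fixed subspace of `τ̄` equals `Σ_{k ∈ ZMod p} (dim ker(σ̄ − ζ^k·id))²`. -/
theorem fixed_dim_of_doubling {n p : ℕ} [hp : Fact p.Prime] (ζ : ℂ)
    (hζ : IsPrimitiveRoot ζ p) (w : Fin n → ZMod p)
    (σ : MvPolynomial (Fin n) ℂ ≃ₐ[ℂ] MvPolynomial (Fin n) ℂ)
    (hσ : ∀ i, σ (X i) = ζ ^ (w i).val • X i)
    (f : MvPolynomial (Fin n) ℂ) (hf : σ f = f)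
    (hfd : FiniteDimensional ℂ (MvPolynomial (Fin n) ℂ ⧸ jacobianIdeal f))
    (σbar : (MvPolynomial (Fin n) ℂ ⧸ jacobianIdeal f) →ₗ[ℂ]
      (MvPolynomial (Fin n) ℂ ⧸ jacobianIdeal f))
    (hσbar : ∀ q, σbar (Ideal.Quotient.mk (jacobianIdeal f) q) =
      Ideal.Quotient.mk (jacobianIdeal f) (σ q))
    (τ : MvPolynomial (Fin n ⊕ Fin n) ℂ ≃ₐ[ℂ] MvPolynomial (Fin n ⊕ Fin n) ℂ)
    (hτl : ∀ i, τ (X (Sum.inl i)) = ζ ^ (w i).val • X (Sum.inl i))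
    (hτr : ∀ i, τ (X (Sum.inr i)) = ζ ^ (-(w i)).val • X (Sum.inr i)) :
    τ (doubling f) = doubling f ∧
    (∀ g ∈ jacobianIdeal (doubling f), τ g ∈ jacobianIdeal (doubling f)) ∧
    ∀ τbar : (MvPolynomial (Fin n ⊕ Fin n) ℂ ⧸ jacobianIdeal (doubling f)) →ₗ[ℂ]
        (MvPolynomial (Fin n ⊕ Fin n) ℂ ⧸ jacobianIdeal (doubling f)),
      (∀ q, τbar (Ideal.Quotient.mk (jacobianIdeal (doubling f)) q) =
        Ideal.Quotient.mk (jacobianIdeal (doubling f)) (τ q)) →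
      Module.finrank ℂ (LinearMap.ker (τbar - LinearMap.id)) =
        ∑ k : ZMod p,
          (Module.finrank ℂ (LinearMap.ker (σbar - ζ ^ k.val • LinearMap.id))) ^ 2 := by
  classical
  haveI := hfd
  have hp0 : 0 < p := hp.out.pos
  have hζ0 : ζ ≠ 0 := by
    intro h
    have := hζ.pow_eq_one
    rw [h, zero_pow hp0.ne'] at this
    exact zero_ne_one this
  -- `σ.symm` on generators
  have hcancel : ∀ a : ZMod p, ζ ^ (-a).val * ζ ^ a.val = 1 := by
    intro a
    rw [← pow_add, hζ.pow_eq_one_iff_dvd]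
    have : (((-a).val + a.val : ℕ) : ZMod p) = 0 := by
      push_cast [ZMod.natCast_val, ZMod.cast_id]
      ring
    exact (ZMod.natCast_eq_zero_iff _ p).mp this
  have hσsymmX : ∀ i, σ.symm (X i) = ζ ^ (-(w i)).val • X i := by
    intro i
    apply σ.injective
    rw [AlgEquiv.apply_symm_apply, map_smul, hσ, smul_smul, hcancel, one_smul]
  -- commutation with renaming
  have hlin : ∀ g, τ (rename Sum.inl g) = rename Sum.inl (σ g) := by
    have h : (τ.toAlgHom.comp (rename Sum.inl)) =
        ((rename Sum.inl).comp σ.toAlgHom :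
          MvPolynomial (Fin n) ℂ →ₐ[ℂ] MvPolynomial (Fin n ⊕ Fin n) ℂ) := by
      apply MvPolynomial.algHom_ext
      intro i
      simp [hτl, hσ]
    intro g
    exact congrArg (fun φ => φ g) (congrArg (fun (ψ : _ →ₐ[ℂ] _) => ψ.toFun) h)
  have hrin : ∀ g, τ (rename Sum.inr g) = rename Sum.inr (σ.symm g) := by
    have h : (τ.toAlgHom.comp (rename Sum.inr)) =
        ((rename Sum.inr).comp σ.symm.toAlgHom :
          MvPolynomial (Fin n) ℂ →ₐ[ℂ] MvPolynomial (Fin n ⊕ Fin n) ℂ) := by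
      apply MvPolynomial.algHom_ext
      intro i
      simp [hτr, hσsymmX]
    intro g
    exact congrArg (fun φ => φ g) (congrArg (fun (ψ : _ →ₐ[ℂ] _) => ψ.toFun) h)
  -- Part 1
  have part1 : τ (doubling f) = doubling f := by
    rw [doubling, map_add, hlin, hrin, hf]
    congr 2
    apply σ.injective
    rw [AlgEquiv.apply_symm_apply, hf]
  -- the eigenvalues of τ on variables
  set ν : Fin n ⊕ Fin n → ℂ :=
    Sum.elim (fun i => ζ ^ (w i).val) (fun i => ζ ^ (-(w i)).val) with hν
  have hτX : ∀ s, τ (X s) = ν s • X s := by rintro (i | i) <;> simpa using (by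
    first
      | exact hτl i
      | exact hτr i)
  have hν0 : ∀ s, ν s ≠ 0 := by rintro (i | i) <;> exact pow_ne_zero _ hζ0
  have hτsymmX : ∀ s, τ.symm (X s) = (ν s)⁻¹ • X s := by
    intro s
    apply τ.injective
    rw [AlgEquiv.apply_symm_apply, map_smul, hτX, smul_smul, inv_mul_cancel₀ (hν0 s), one_smul]
  have hτsymmF : τ.symm (doubling f) = doubling f := by
    conv_lhs => rw [← part1]
    rw [AlgEquiv.symm_apply_apply]
  have htau_pd : ∀ j, τ (pderiv j (doubling f)) = (ν j)⁻¹ • pderiv j (doubling f) := by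
    intro j
    have := conj_pderiv τ.symm (fun s => (ν s)⁻¹) hτsymmX j (doubling f)
    rw [hτsymmF, AlgEquiv.symm_symm] at this
    exact this
  -- Part 2
  have part2 : ∀ g ∈ jacobianIdeal (doubling f), τ g ∈ jacobianIdeal (doubling f) := by
    have hle : Ideal.map τ (jacobianIdeal (doubling f)) ≤ jacobianIdeal (doubling f) := by
      rw [jacobianIdeal, Ideal.map_span]
      apply Ideal.span_le.mpr
      rintro _ ⟨_, ⟨j, rfl⟩, rfl⟩
      show τ (pderiv j (doubling f)) ∈ _
      rw [htau_pd]
      exact Submodule.smul_of_tower_mem _ _ (Ideal.subset_span ⟨j, rfl⟩)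
    intro g hg
    exact hle (Ideal.mem_map_of_mem _ hg)
  refine ⟨part1, part2, ?_⟩
  intro τbar hτbar
  -- σ.symm stabilizes the Jacobian ideal of f
  have hσgen : ∀ i, σ.symm (pderiv i f) = ζ ^ (w i).val • pderiv i f := by
    intro i
    have h := conj_pderiv σ (fun i => ζ ^ (w i).val) hσ i f
    rw [hf] at h
    exact h
  have hIstable : jacobianIdeal f ≤ (jacobianIdeal f).comap σ.symm.toAlgHom := by
    rw [jacobianIdeal, Ideal.span_le]
    rintro _ ⟨i, rfl⟩
    show σ.symm (pderiv i f) ∈ jacobianIdeal f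
    rw [hσgen]
    exact Submodule.smul_of_tower_mem _ _ (Ideal.subset_span ⟨i, rfl⟩)
  -- the induced inverse map on the quotient
  set σbar' : (MvPolynomial (Fin n) ℂ ⧸ jacobianIdeal f) →ₗ[ℂ]
      (MvPolynomial (Fin n) ℂ ⧸ jacobianIdeal f) :=
    (Ideal.quotientMapₐ (jacobianIdeal f) σ.symm.toAlgHom hIstable).toLinearMap with hσbar'def
  have hσbar' : ∀ q, σbar' (Ideal.Quotient.mk (jacobianIdeal f) q) =
      Ideal.Quotient.mk (jacobianIdeal f) (σ.symm q) := by
    intro q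
    rw [hσbar'def]
    simp [Ideal.quotient_map_mkₐ, Ideal.Quotient.mkₐ_eq_mk]
  have hinv1 : ∀ v, σbar' (σbar v) = v := by
    intro v
    obtain ⟨q, rfl⟩ := Ideal.Quotient.mk_surjective v
    rw [hσbar, hσbar', AlgEquiv.symm_apply_apply]
  -- σbar ^ p = 1
  have hσpowX : ∀ (m : ℕ) (i : Fin n), (σ ^ m) (X i) = (ζ ^ (w i).val) ^ m • X i := by
    intro m
    induction m with
    | zero => intro i; simp
    | succ m ih =>
        intro i
        rw [pow_succ, AlgEquiv.mul_apply, hσ, map_smul, ih, smul_smul, ← pow_succ']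
  have hσp : σ ^ p = 1 := by
    have hhom : ((σ ^ p) : MvPolynomial (Fin n) ℂ ≃ₐ[ℂ] MvPolynomial (Fin n) ℂ).toAlgHom =
        ((1 : MvPolynomial (Fin n) ℂ ≃ₐ[ℂ] MvPolynomial (Fin n) ℂ)).toAlgHom := by
      apply MvPolynomial.algHom_ext
      intro i
      show (σ ^ p) (X i) = (1 : MvPolynomial (Fin n) ℂ ≃ₐ[ℂ] MvPolynomial (Fin n) ℂ) (X i)
      rw [hσpowX, pow_right_comm, hζ.pow_eq_one, one_pow, one_smul, AlgEquiv.one_apply]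
    apply AlgEquiv.ext
    intro x
    exact congrArg (fun (ψ : _ →ₐ[ℂ] _) => ψ x) hhom
  have hσbariter : ∀ (m : ℕ) q, (σbar ^ m) (Ideal.Quotient.mk (jacobianIdeal f) q) =
      Ideal.Quotient.mk (jacobianIdeal f) ((σ ^ m) q) := by
    intro m
    induction m with
    | zero => intro q; simp
    | succ m ih =>
        intro q
        rw [pow_succ', Module.End.mul_apply, ih, hσbar, pow_succ', AlgEquiv.mul_apply]
  have hUσ : σbar ^ p = 1 := by
    apply LinearMap.ext
    intro v
    obtain ⟨q, rfl⟩ := Ideal.Quotient.mk_surjective v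
    rw [hσbariter, hσp, Module.End.one_apply, AlgEquiv.one_apply]
  -- eigen-decomposition of σbar
  have hInt := isInternal_ker_of_pow_eq_one hζ σbar hUσ
  set m : ZMod p → ℕ := fun k =>
    Module.finrank ℂ (LinearMap.ker (σbar - ζ ^ (k : ZMod p).val • LinearMap.id)) with hm
  set b : Basis (Σ k : ZMod p, Fin (m k)) ℂ
      (MvPolynomial (Fin n) ℂ ⧸ jacobianIdeal f) :=
    hInt.collectedBasis (fun k => Module.finBasis ℂ _) with hbdef
  have hbeig : ∀ x : Σ k : ZMod p, Fin (m k), σbar (b x) = ζ ^ (x.1).val • b x := by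
    intro x
    have hmem := hInt.collectedBasis_mem (fun k => Module.finBasis ℂ _) x
    rw [LinearMap.mem_ker, LinearMap.sub_apply, LinearMap.smul_apply, LinearMap.id_apply,
      sub_eq_zero] at hmem
    exact hmem
  have hbeig' : ∀ x : Σ k : ZMod p, Fin (m k),
      σbar' (b x) = (ζ ^ (x.1).val)⁻¹ • b x := by
    intro x
    have h1 : σbar' (σbar (b x)) = b x := hinv1 _
    rw [hbeig, map_smul] at h1
    calc σbar' (b x) = (ζ ^ (x.1).val)⁻¹ • (ζ ^ (x.1).val • σbar' (b x)) := by
          rw [smul_smul, inv_mul_cancel₀ (pow_ne_zero _ hζ0), one_smul]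
      _ = (ζ ^ (x.1).val)⁻¹ • b x := by rw [h1]
  -- the tensor product model
  set I0 : Submodule ℂ (MvPolynomial (Fin n) ℂ) :=
    Submodule.restrictScalars ℂ (jacobianIdeal f) with hI0
  set K : Submodule ℂ (MvPolynomial (Fin n) ℂ ⊗[ℂ] MvPolynomial (Fin n) ℂ) :=
    LinearMap.range (TensorProduct.map I0.subtype LinearMap.id) ⊔
      LinearMap.range (TensorProduct.map LinearMap.id I0.subtype) with hK
  set J0 : Submodule ℂ (MvPolynomial (Fin n ⊕ Fin n) ℂ) :=
    Submodule.restrictScalars ℂ (jacobianIdeal (doubling f)) with hJ0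
  have hInlJ : ∀ x ∈ jacobianIdeal f,
      rename Sum.inl x ∈ jacobianIdeal (doubling f) := by
    have hle : Ideal.map (rename Sum.inl) (jacobianIdeal f) ≤ jacobianIdeal (doubling f) := by
      rw [jacobianIdeal, Ideal.map_span]
      apply Ideal.span_le.mpr
      rintro _ ⟨_, ⟨i, rfl⟩, rfl⟩
      show rename Sum.inl (pderiv i f) ∈ jacobianIdeal (doubling f)
      rw [show rename Sum.inl (pderiv i f) = pderiv (Sum.inl i) (doubling f) from
        (pderiv_doubling f (Sum.inl i)).symm]
      exact Ideal.subset_span ⟨Sum.inl i, rfl⟩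
    exact fun x hx => hle (Ideal.mem_map_of_mem _ hx)
  have hInrJ : ∀ x ∈ jacobianIdeal f,
      rename Sum.inr x ∈ jacobianIdeal (doubling f) := by
    have hle : Ideal.map (rename Sum.inr) (jacobianIdeal f) ≤ jacobianIdeal (doubling f) := by
      rw [jacobianIdeal, Ideal.map_span]
      apply Ideal.span_le.mpr
      rintro _ ⟨_, ⟨i, rfl⟩, rfl⟩
      show rename Sum.inr (pderiv i f) ∈ jacobianIdeal (doubling f)
      rw [show rename Sum.inr (pderiv i f) = pderiv (Sum.inr i) (doubling f) from
        (pderiv_doubling f (Sum.inr i)).symm]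
      exact Ideal.subset_span ⟨Sum.inr i, rfl⟩
    exact fun x hx => hle (Ideal.mem_map_of_mem _ hx)
  -- K is an ideal (stable under multiplication)
  have hK1 : ∀ (t : MvPolynomial (Fin n) ℂ ⊗[ℂ] MvPolynomial (Fin n) ℂ),
      ∀ y ∈ LinearMap.range (TensorProduct.map I0.subtype
        (LinearMap.id : MvPolynomial (Fin n) ℂ →ₗ[ℂ] MvPolynomial (Fin n) ℂ)),
      t * y ∈ LinearMap.range (TensorProduct.map I0.subtype LinearMap.id) := by
    intro t y hy
    rw [TensorProduct.range_map_eq_span_tmul] at hy ⊢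
    induction t using TensorProduct.induction_on with
    | zero => rw [zero_mul]; exact Submodule.zero_mem _
    | add t1 t2 h1 h2 => rw [add_mul]; exact Submodule.add_mem _ h1 h2
    | tmul c d =>
        refine Submodule.span_induction ?_ ?_ ?_ ?_ hy
        · rintro _ ⟨x, a, rfl⟩
          refine Submodule.subset_span ⟨⟨c * (x : MvPolynomial (Fin n) ℂ),
            (jacobianIdeal f).mul_mem_left c x.2⟩, d * a, ?_⟩
          simp [Algebra.TensorProduct.tmul_mul_tmul]
        · rw [mul_zero]; exact Submodule.zero_mem _
        · intro u v _ _ hu hv; rw [mul_add]; exact Submodule.add_mem _ hu hv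
        · intro r u _ hu; rw [mul_smul_comm]; exact Submodule.smul_mem _ _ hu
  have hK2 : ∀ (t : MvPolynomial (Fin n) ℂ ⊗[ℂ] MvPolynomial (Fin n) ℂ),
      ∀ y ∈ LinearMap.range (TensorProduct.map
        (LinearMap.id : MvPolynomial (Fin n) ℂ →ₗ[ℂ] MvPolynomial (Fin n) ℂ) I0.subtype),
      t * y ∈ LinearMap.range (TensorProduct.map LinearMap.id I0.subtype) := by
    intro t y hy
    rw [TensorProduct.range_map_eq_span_tmul] at hy ⊢
    induction t using TensorProduct.induction_on with
    | zero => rw [zero_mul]; exact Submodule.zero_mem _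
    | add t1 t2 h1 h2 => rw [add_mul]; exact Submodule.add_mem _ h1 h2
    | tmul c d =>
        refine Submodule.span_induction ?_ ?_ ?_ ?_ hy
        · rintro _ ⟨a, x, rfl⟩
          refine Submodule.subset_span ⟨c * a, ⟨d * (x : MvPolynomial (Fin n) ℂ),
            (jacobianIdeal f).mul_mem_left d x.2⟩, ?_⟩
          simp [Algebra.TensorProduct.tmul_mul_tmul]
        · rw [mul_zero]; exact Submodule.zero_mem _
        · intro u v _ _ hu hv; rw [mul_add]; exact Submodule.add_mem _ hu hv
        · intro r u _ hu; rw [mul_smul_comm]; exact Submodule.smul_mem _ _ hu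
  have hKmul : ∀ (t y : MvPolynomial (Fin n) ℂ ⊗[ℂ] MvPolynomial (Fin n) ℂ),
      y ∈ K → t * y ∈ K := by
    intro t y hy
    rw [hK] at hy
    obtain ⟨y1, h1, y2, h2, rfl⟩ := Submodule.mem_sup.mp hy
    rw [mul_add, hK]
    exact Submodule.add_mem _ (Submodule.mem_sup_left (hK1 t y1 h1))
      (Submodule.mem_sup_right (hK2 t y2 h2))
  -- the image of K under the tensor equivalence is J0

  have hmap : Submodule.map ((sumTensorEquiv n).toLinearEquiv : _ →ₗ[ℂ] _) K = J0 := by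
    apply le_antisymm
    · rw [Submodule.map_le_iff_le_comap, hK]
      refine sup_le ?_ ?_
      · rw [TensorProduct.range_map_eq_span_tmul, Submodule.span_le]
        rintro _ ⟨x, a, rfl⟩
        simp only [SetLike.mem_coe, Submodule.mem_comap, AlgEquiv.toLinearEquiv_apply]
        show sumTensorEquiv n ((x : MvPolynomial (Fin n) ℂ) ⊗ₜ[ℂ]
          (LinearMap.id a : MvPolynomial (Fin n) ℂ)) ∈ J0
        rw [hJ0]
        show sumTensorEquiv n _ ∈ jacobianIdeal (doubling f)
        rw [LinearMap.id_apply, sumTensorEquiv_tmul]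
        exact Ideal.mul_mem_right _ _ (hInlJ _ x.2)
      · rw [TensorProduct.range_map_eq_span_tmul, Submodule.span_le]
        rintro _ ⟨a, x, rfl⟩
        simp only [SetLike.mem_coe, Submodule.mem_comap, AlgEquiv.toLinearEquiv_apply]
        show sumTensorEquiv n ((LinearMap.id a : MvPolynomial (Fin n) ℂ) ⊗ₜ[ℂ]
          (x : MvPolynomial (Fin n) ℂ)) ∈ J0
        rw [hJ0]
        show sumTensorEquiv n _ ∈ jacobianIdeal (doubling f)
        rw [LinearMap.id_apply, sumTensorEquiv_tmul]
        exact Ideal.mul_mem_left _ _ (hInrJ _ x.2)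
    · intro z hz
      have hz' : z ∈ Ideal.span (Set.range fun j : Fin n ⊕ Fin n =>
          pderiv j (doubling f)) := hz
      refine Submodule.span_induction ?_ ?_ ?_ ?_ hz'
      · rintro _ ⟨j, rfl⟩
        cases j with
        | inl i =>
            refine ⟨(pderiv i f) ⊗ₜ[ℂ] 1, ?_, ?_⟩
            · rw [hK]
              refine Submodule.mem_sup_left ⟨(⟨pderiv i f,
                  Ideal.subset_span ⟨i, rfl⟩⟩ : I0) ⊗ₜ[ℂ] (1 : MvPolynomial (Fin n) ℂ), ?_⟩
              rw [TensorProduct.map_tmul]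
              rfl
            · rw [LinearEquiv.coe_coe, AlgEquiv.toLinearEquiv_apply, sumTensorEquiv_tmul, map_one, mul_one]
              exact (pderiv_doubling f (Sum.inl i)).symm
        | inr i =>
            refine ⟨(1 : MvPolynomial (Fin n) ℂ) ⊗ₜ[ℂ] (pderiv i f), ?_, ?_⟩
            · rw [hK]
              refine Submodule.mem_sup_right ⟨(1 : MvPolynomial (Fin n) ℂ) ⊗ₜ[ℂ]
                  (⟨pderiv i f, Ideal.subset_span ⟨i, rfl⟩⟩ : I0), ?_⟩
              rw [TensorProduct.map_tmul]
              rfl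
            · rw [LinearEquiv.coe_coe, AlgEquiv.toLinearEquiv_apply, sumTensorEquiv_tmul, map_one, one_mul]
              exact (pderiv_doubling f (Sum.inr i)).symm
      · exact Submodule.zero_mem _
      · intro u v _ _ hu hv; exact Submodule.add_mem _ hu hv
      · intro a x _ hx
        obtain ⟨y, hyK, hyx⟩ := hx
        refine ⟨(sumTensorEquiv n).symm a * y, hKmul _ _ hyK, ?_⟩
        rw [LinearEquiv.coe_coe, AlgEquiv.toLinearEquiv_apply] at hyx ⊢
        rw [map_mul, AlgEquiv.apply_symm_apply, hyx, smul_eq_mul]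
  -- assemble the linear equivalence Φ
  set e0 := Submodule.Quotient.restrictScalarsEquiv ℂ
    ((jacobianIdeal f) : Submodule (MvPolynomial (Fin n) ℂ) (MvPolynomial (Fin n) ℂ)) with he0
  set e1 := Submodule.Quotient.restrictScalarsEquiv ℂ
    ((jacobianIdeal (doubling f)) :
      Submodule (MvPolynomial (Fin n ⊕ Fin n) ℂ) (MvPolynomial (Fin n ⊕ Fin n) ℂ)) with he1
  set eqv := Submodule.Quotient.equiv K J0 (sumTensorEquiv n).toLinearEquiv hmap with heqv
  set Φ := (TensorProduct.congr e0.symm e0.symm).trans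
    ((TensorProduct.quotientTensorQuotientEquiv I0 I0).trans (eqv.trans e1)) with hΦ
  have ΦmkTmul : ∀ a c : MvPolynomial (Fin n) ℂ,
      Φ ((Ideal.Quotient.mk (jacobianIdeal f) a) ⊗ₜ[ℂ] (Ideal.Quotient.mk (jacobianIdeal f) c))
        = Ideal.Quotient.mk (jacobianIdeal (doubling f)) (sumTensorEquiv n (a ⊗ₜ[ℂ] c)) := by
    intro a c
    rw [hΦ, ← Ideal.Quotient.mk_eq_mk, ← Ideal.Quotient.mk_eq_mk, ← Ideal.Quotient.mk_eq_mk]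
    rw [LinearEquiv.trans_apply, TensorProduct.congr_tmul,
      Submodule.Quotient.restrictScalarsEquiv_symm_mk, Submodule.Quotient.restrictScalarsEquiv_symm_mk,
      LinearEquiv.trans_apply]
    rw [show (TensorProduct.quotientTensorQuotientEquiv I0 I0)
        ((Submodule.Quotient.mk a) ⊗ₜ[ℂ] (Submodule.Quotient.mk c)) =
        Submodule.Quotient.mk (a ⊗ₜ[ℂ] c) from rfl]
    rw [LinearEquiv.trans_apply, heqv, Submodule.Quotient.equiv_apply, Submodule.mapQ_apply]
    rfl
  -- intertwining
  have hcomm : ∀ t, τbar (Φ t) = Φ (TensorProduct.map σbar σbar' t) := by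
    intro t
    induction t using TensorProduct.induction_on with
    | zero => rw [map_zero Φ, τbar.map_zero, (TensorProduct.map σbar σbar').map_zero, map_zero Φ]
    | add t1 t2 h1 h2 =>
        rw [map_add (TensorProduct.map σbar σbar'), map_add Φ, map_add Φ, map_add τbar, h1, h2]
    | tmul x y =>
        obtain ⟨a, rfl⟩ := Ideal.Quotient.mk_surjective x
        obtain ⟨c, rfl⟩ := Ideal.Quotient.mk_surjective y
        rw [TensorProduct.map_tmul, hσbar, hσbar', ΦmkTmul, ΦmkTmul, hτbar]
        congr 1
        rw [sumTensorEquiv_tmul, sumTensorEquiv_tmul, map_mul, hlin, hrin]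
  -- eigenbasis of the quotient in 2n variables
  set B := (Basis.tensorProduct b b).map Φ with hB
  have hBeig : ∀ x : (Σ k : ZMod p, Fin (m k)) × (Σ k : ZMod p, Fin (m k)),
      τbar (B x) = (ζ ^ (x.1.1).val * (ζ ^ (x.2.1).val)⁻¹) • B x := by
    intro x
    have hBx : B x = Φ (b x.1 ⊗ₜ[ℂ] b x.2) := by
      rw [hB, Basis.map_apply, Basis.tensorProduct_apply']
    rw [hBx, hcomm, TensorProduct.map_tmul, hbeig, hbeig', TensorProduct.tmul_smul,
      ← TensorProduct.smul_tmul', map_smul, map_smul, smul_smul,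
      mul_comm ((ζ ^ (x.2.1).val)⁻¹) _]
  have hker := ker_diag_finrank B τbar
    (fun x => ζ ^ (x.1.1).val * (ζ ^ (x.2.1).val)⁻¹) hBeig 1
  rw [show τbar - LinearMap.id = τbar - (1 : ℂ) • LinearMap.id by rw [one_smul]]
  rw [hker]
  have hfilter : (Finset.univ.filter
        (fun x : (Σ k : ZMod p, Fin (m k)) × (Σ k : ZMod p, Fin (m k)) =>
          ζ ^ (x.1.1).val * (ζ ^ (x.2.1).val)⁻¹ = 1))
      = Finset.univ.filter (fun x => x.1.1 = x.2.1) := by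
    refine Finset.filter_congr fun x _ => ?_
    rw [mul_inv_eq_one₀ (pow_ne_zero _ hζ0)]
    constructor
    · intro h
      exact ZMod.val_injective p (hζ.pow_inj (ZMod.val_lt _) (ZMod.val_lt _) h)
    · intro h; rw [h]
  rw [hfilter, card_pairs_fst (fun x : Σ k : ZMod p, Fin (m k) => x.1)]
  refine Finset.sum_congr rfl fun k _ => ?_
  rw [card_sigma_fst m k]
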